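/- Every periodic oriented double ray with infinitely many turns is non-ubiquitous. -/

import Mathlib

/-- A copy of the digraph `H` in the digraph `D`: an injective arc-preserving map. -/
structure DCopy {V W : Type} (H : Digraph V) (D : Digraph W) where
  toFun : V → W
  inj : Function.Injective toFun
  adj : ∀ u v : V, H.Adj u v → D.Adj (toFun u) (toFun v)

/-- Two copies are vertex-disjoint if their images are disjoint. -/
def DCopy.VDisjoint {V W : Type} {H : Digraph V} {D : Digraph W}
    (c₁ c₂ : DCopy H D) : Prop :=
  ∀ u v : V, c₁.toFun u ≠ c₂.toFun v

/-- `D` contains arbitrarily many pairwise vertex-disjoint copies of `H`. -/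
def ManyDisjointCopies {V W : Type} (H : Digraph V) (D : Digraph W) : Prop :=
  ∀ k : ℕ, ∃ f : Fin k → DCopy H D, ∀ i j : Fin k, i ≠ j → (f i).VDisjoint (f j)

/-- `D` contains infinitely many pairwise vertex-disjoint copies of `H`. -/
def InfDisjointCopies {V W : Type} (H : Digraph V) (D : Digraph W) : Prop :=
  ∃ f : ℕ → DCopy H D, ∀ i j : ℕ, i ≠ j → (f i).VDisjoint (f j)

/-- A digraph `H` is ubiquitous if every digraph containing arbitrarily many
pairwise disjoint copies of `H` contains infinitely many. -/
def Ubiquitous {V : Type} (H : Digraph V) : Prop :=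
  ∀ (W : Type) (D : Digraph W), ManyDisjointCopies H D → InfDisjointCopies H D

/-- The oriented double ray on `ℤ` determined by the orientation function `o`:
`o n = true` means the arc between `n` and `n+1` points from `n` to `n+1`. -/
def doubleRay (o : ℤ → Bool) : Digraph ℤ where
  Adj u v := (v = u + 1 ∧ o u = true) ∨ (u = v + 1 ∧ o v = false)

/-- A turn of the double ray: a vertex of in-degree 2 or out-degree 2. -/
def IsTurn (o : ℤ → Bool) (n : ℤ) : Prop := o (n - 1) ≠ o n

/-- The oriented ray on `ℕ` determined by the orientation function `r`:
`r i = true` means the arc between `i` and `i+1` points from `i` to `i+1`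
(away from the root `0`). -/
def rayD (r : ℕ → Bool) : Digraph ℕ where
  Adj u v := (v = u + 1 ∧ r u = true) ∨ (u = v + 1 ∧ r v = false)

/-- The backward tail `Rv` of the double ray, as a ray rooted at `v`:
index `i` corresponds to the vertex `v - i`. -/
def backTail (o : ℤ → Bool) (v : ℤ) : ℕ → Bool := fun i => !o (v - i - 1)

/-- The forward tail `vR` of the double ray, as a ray rooted at `v`:
index `i` corresponds to the vertex `v + i`. -/
def fwdTail (o : ℤ → Bool) (v : ℤ) : ℕ → Bool := fun i => o (v + i)

/-- A digraph homomorphism (endomorphism) of the ray `rayD r`. -/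
def IsRayHom (r : ℕ → Bool) (f : ℕ → ℕ) : Prop :=
  ∀ u v : ℕ, (rayD r).Adj u v → (rayD r).Adj (f u) (f v)

/-- A ray is periodic if it has a non-trivial order-preserving endomorphism. -/
def RayPeriodic (r : ℕ → Bool) : Prop :=
  ∃ f : ℕ → ℕ, IsRayHom r f ∧ Monotone f ∧ f ≠ id

/-- `p` is the periodicity of the ray `rayD r`: the least distance `d(v, f v)`
over all vertices `v` and non-trivial order-preserving endomorphisms `f`. -/
def RayPeriodicity (r : ℕ → Bool) (p : ℕ) : Prop :=
  IsLeast {d : ℕ | ∃ f : ℕ → ℕ, IsRayHom r f ∧ Monotone f ∧ f ≠ id ∧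
    ∃ v : ℕ, Nat.dist (f v) v = d} p

/-- A digraph homomorphism (endomorphism) of the double ray `doubleRay o`. -/
def IsDRayHom (o : ℤ → Bool) (f : ℤ → ℤ) : Prop :=
  ∀ u v : ℤ, (doubleRay o).Adj u v → (doubleRay o).Adj (f u) (f v)

/-- A double ray is periodic if it has a non-trivial order-preserving endomorphism. -/
def DRayPeriodic (o : ℤ → Bool) : Prop :=
  ∃ f : ℤ → ℤ, IsDRayHom o f ∧ Monotone f ∧ f ≠ id

/-- `p` is the periodicity of the double ray `doubleRay o`. -/
def DRayPeriodicity (o : ℤ → Bool) (p : ℕ) : Prop :=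
  IsLeast {d : ℕ | ∃ f : ℤ → ℤ, IsDRayHom o f ∧ Monotone f ∧ f ≠ id ∧
    ∃ v : ℤ, (f v - v).natAbs = d} p

/-- The rays `rayD r` and `rayD r'` are isomorphic as digraphs. -/
def RayIso (r r' : ℕ → Bool) : Prop :=
  ∃ φ : ℕ ≃ ℕ, ∀ u v : ℕ, (rayD r).Adj u v ↔ (rayD r').Adj (φ u) (φ v)

/-- The ray `rayD r` is isomorphic to a subdigraph of the ray `rayD r'`. -/
def RayLE (r r' : ℕ → Bool) : Prop :=
  ∃ f : ℕ → ℕ, Function.Injective f ∧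
    ∀ u v : ℕ, (rayD r).Adj u v → (rayD r').Adj (f u) (f v)

/-- An in-ray: every arc points towards the root. -/
def IsInRay (r : ℕ → Bool) : Prop := ∀ i : ℕ, r i = false

/-- An out-ray: every arc points away from the root. -/
def IsOutRay (r : ℕ → Bool) : Prop := ∀ i : ℕ, r i = true

namespace PIT


/-- From periodicity of the double ray, extract a genuine nonzero period for `o`. -/
theorem exists_period (o : ℤ → Bool) (hp : DRayPeriodic o) :
    ∃ p : ℕ, 0 < p ∧ ∀ u : ℤ, o (u + (p : ℤ)) = o u := by
  obtain ⟨f, hhom, hmono, hne⟩ := hp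
  have step : ∀ u : ℤ, f (u + 1) = f u + 1 ∧ o (f u) = o u := by
    intro u
    cases ho : o u with
    | true =>
      have hadj : (doubleRay o).Adj u (u + 1) := Or.inl ⟨rfl, ho⟩
      have h2 := hhom _ _ hadj
      rcases h2 with ⟨h3, h4⟩ | ⟨h3, h4⟩
      · exact ⟨h3, by rw [h4]⟩
      · exfalso
        have := hmono (show u ≤ u + 1 by omega)
        omega
    | false =>
      have hadj : (doubleRay o).Adj (u + 1) u := Or.inr ⟨rfl, ho⟩
      have h2 := hhom _ _ hadj
      rcases h2 with ⟨h3, h4⟩ | ⟨h3, h4⟩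
      · exfalso
        have := hmono (show u ≤ u + 1 by omega)
        omega
      · exact ⟨h3, by rw [h4]⟩
  have hlin : ∀ u : ℤ, f u = u + f 0 := by
    intro u
    induction u using Int.induction_on with
    | zero => omega
    | succ i ih => have := (step i).1; omega
    | pred i ih => have := (step (-(i:ℤ) - 1)).1; rw [show (-(i:ℤ)-1)+1 = -(i:ℤ) by ring] at this; omega
  have hc0 : f 0 ≠ 0 := by
    intro h0
    apply hne
    funext u
    simp [hlin u, h0]
  have hper : ∀ u : ℤ, o (u + f 0) = o u := by
    intro u
    have := (step u).2
    rw [hlin u] at this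
    exact this
  refine ⟨(f 0).natAbs, by positivity, ?_⟩
  intro u
  rcases Int.natAbs_eq (f 0) with h | h
  · rw [← h]; exact hper u
  · have h2 := hper (u + ((f 0).natAbs : ℤ))
    rw [show u + ((f 0).natAbs:ℤ) + f 0 = u by omega] at h2
    exact h2.symm



def IsLane (l : ℕ × ℕ) : Prop := l.2 < l.1

def codeL (l : ℕ × ℕ) : ℕ := Nat.pair l.1 l.2

lemma codeL_inj : Function.Injective codeL := by
  intro a b h
  have := Nat.pair_eq_pair.mp h
  exact Prod.ext this.1 this.2

def xC (p : ℕ) (μ : ℕ × ℕ) : ℤ := (6 * p : ℤ) * codeL μ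

def yC (p : ℕ) (ν : ℕ × ℕ) : ℤ := 1 - (6 * p : ℤ) * (codeL ν + 1)

def Crossing (α β : ℕ × ℕ) : Prop := IsLane α ∧ IsLane β ∧ α.1 < β.1

abbrev Wt : Type := (ℕ × ℕ) × ℤ

open Classical in
noncomputable def rep (p : ℕ) (w : Wt) : Wt :=
  if h : ∃ α, Crossing α w.1 ∧ w.2 = yC p α then (h.choose, xC p w.1) else w

lemma yC_inj (p : ℕ) (hp : 0 < p) {α β : ℕ × ℕ} (h : yC p α = yC p β) : α = β := by
  apply codeL_inj
  unfold yC at h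
  have h6 : (0:ℤ) < 6 * p := by positivity
  have : (codeL α : ℤ) = codeL β := by nlinarith [h, h6]
  exact_mod_cast this

lemma rep_redirect (p : ℕ) (hp : 0 < p) {α β : ℕ × ℕ} (h : Crossing α β) :
    rep p (β, yC p α) = (α, xC p β) := by
  have hex : ∃ γ, Crossing γ (β, yC p α).1 ∧ (β, yC p α).2 = yC p γ := ⟨α, h, rfl⟩
  rw [rep]
  rw [dif_pos hex]
  have hspec := hex.choose_spec
  have hαγ : hex.choose = α := yC_inj p hp hspec.2.symm
  rw [hαγ]

lemma rep_id (p : ℕ) {μ : ℕ × ℕ} {z : ℤ}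
    (h : ¬ ∃ α, Crossing α μ ∧ z = yC p α) : rep p (μ, z) = (μ, z) := by
  rw [rep]
  exact dif_neg h

lemma rep_cases (p : ℕ) (hp : 0 < p) (w : Wt) :
    rep p w = w ∨ ∃ α, Crossing α w.1 ∧ w.2 = yC p α ∧ rep p w = (α, xC p w.1) := by
  by_cases h : ∃ α, Crossing α w.1 ∧ w.2 = yC p α
  · obtain ⟨α, hc, hz⟩ := h
    right
    refine ⟨α, hc, hz, ?_⟩
    have hw : w = (w.1, yC p α) := by
      rw [← hz]
    rw [hw, rep_redirect p hp hc]
  · left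
    obtain ⟨μ, z⟩ := w
    exact rep_id p h

lemma xC_nonneg (p : ℕ) (μ : ℕ × ℕ) : 0 ≤ xC p μ := by
  unfold xC; positivity

lemma yC_neg (p : ℕ) (hp : 0 < p) (ν : ℕ × ℕ) : yC p ν < 0 := by
  unfold yC
  have h1 : (1:ℤ) ≤ p := by exact_mod_cast hp
  nlinarith [Int.ofNat_nonneg (codeL ν)]

lemma xC_ne_yC (p : ℕ) (hp : 0 < p) (μ ν : ℕ × ℕ) : xC p μ ≠ yC p ν := by
  have := xC_nonneg p μ
  have := yC_neg p hp ν
  omega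

lemma rep_xC (p : ℕ) (hp : 0 < p) (α μ : ℕ × ℕ) : rep p (α, xC p μ) = (α, xC p μ) := by
  apply rep_id
  rintro ⟨ν, -, hz⟩
  exact xC_ne_yC p hp μ ν hz

lemma rep_lane_inj (p : ℕ) (hp : 0 < p) {l : ℕ × ℕ} {x y : ℤ}
    (h : rep p (l, x) = rep p (l, y)) : x = y := by
  rcases rep_cases p hp (l, x) with h1 | ⟨α, hc, hz, h1⟩ <;>
    rcases rep_cases p hp (l, y) with h2 | ⟨β, hc', hz', h2⟩
  · rw [h1, h2] at h
    rw [Prod.ext_iff] at h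
    exact h.2
  · rw [h1, h2] at h
    rw [Prod.ext_iff] at h
    exfalso
    have h3 : l = β := h.1
    have h4 : β.1 < l.1 := hc'.2.2
    rw [h3] at h4
    omega
  · rw [h1, h2] at h
    rw [Prod.ext_iff] at h
    exfalso
    have h3 : α = l := h.1
    have h4 : α.1 < l.1 := hc.2.2
    rw [h3] at h4
    omega
  · rw [h1, h2] at h
    rw [Prod.ext_iff] at h
    have h3 : α = β := h.1
    simp only at hz hz'
    rw [hz, hz', h3]

lemma rep_cross (p : ℕ) (hp : 0 < p) {α β : ℕ × ℕ} {x y : ℤ}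
    (h : rep p (α, x) = rep p (β, y)) (hne : α ≠ β) :
    (Crossing β α ∧ x = yC p β ∧ y = xC p α) ∨
    (Crossing α β ∧ y = yC p α ∧ x = xC p β) := by
  rcases rep_cases p hp (α, x) with h1 | ⟨γ, hc, hz, h1⟩ <;>
    rcases rep_cases p hp (β, y) with h2 | ⟨δ, hc', hz', h2⟩
  · rw [h1, h2] at h
    rw [Prod.ext_iff] at h
    exact absurd h.1 hne
  · rw [h1, h2] at h
    rw [Prod.ext_iff] at h
    simp only at h hz'
    right
    have hδ : δ = α := h.1.symm
    rw [hδ] at hc' hz'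
    exact ⟨hc', hz', h.2⟩
  · rw [h1, h2] at h
    rw [Prod.ext_iff] at h
    simp only at h hz
    left
    have hγ : γ = β := h.1
    rw [hγ] at hc hz
    exact ⟨hc, hz, h.2.symm⟩
  · rw [h1, h2] at h
    rw [Prod.ext_iff] at h
    simp only at h hz hz'
    exfalso
    have h5 : xC p α = xC p β := h.2
    have h6 : (0:ℤ) < 6*p := by positivity
    have h7 : (codeL α : ℤ) = codeL β := by
      unfold xC at h5; nlinarith
    have h8 : codeL α = codeL β := by exact_mod_cast h7
    exact hne (codeL_inj h8)



lemma bool_per_k {F : ℤ → Bool} {p : ℕ} (hF : ∀ z : ℤ, F (z + (p:ℤ)) = F z) :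
    ∀ (k : ℤ) (z : ℤ), F (z + k * p) = F z := by
  intro k
  induction k using Int.induction_on with
  | zero => intro z; simp
  | succ i ih => intro z; rw [show z + ((i:ℤ)+1) * p = (z + i*p) + p by ring, hF, ih]
  | pred i ih =>
    intro z
    have h2 := hF (z + (-(i:ℤ) - 1) * p)
    rw [show z + (-(i:ℤ) - 1) * p + (p:ℤ) = z + (-(i:ℤ)) * p by ring] at h2
    rw [← h2]
    exact ih z

lemma per_dvd {o : ℤ → Bool} {p : ℕ} (hper : ∀ u : ℤ, o (u + (p:ℤ)) = o u)
    {z w : ℤ} (h : (p:ℤ) ∣ z - w) : o z = o w := by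
  obtain ⟨k, hk⟩ := h
  have hzw : z = w + k * (p:ℤ) := by rw [mul_comm k (p:ℤ)]; omega
  rw [hzw, bool_per_k hper]

lemma agree_ext {p : ℕ} (hp : 0 < p) (F G : ℤ → Bool)
    (hF : ∀ z, F (z + (p:ℤ)) = F z) (hG : ∀ z, G (z + (p:ℤ)) = G z) (c : ℤ)
    (h : ∀ t : ℤ, 0 ≤ t → t < (p:ℤ) → F (c + t) = G (c + t)) : ∀ z, F z = G z := by
  intro z
  have hp' : (0:ℤ) < p := by exact_mod_cast hp
  set t := (z - c) % (p:ℤ) with ht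
  have ht0 : 0 ≤ t := Int.emod_nonneg _ (by omega)
  have htp : t < (p:ℤ) := Int.emod_lt_of_pos _ hp'
  have hem := Int.mul_ediv_add_emod (z - c) (p:ℤ)
  have hzz : z = (c + t) + ((z - c) / (p:ℤ)) * (p:ℤ) := by
    rw [mul_comm ((z - c) / (p:ℤ)) (p:ℤ)]
    omega
  rw [hzz, bool_per_k hF, bool_per_k hG]
  exact h t ht0 htp

lemma shift_inv_contra {o : ℤ → Bool} {p : ℕ} (hper : ∀ u : ℤ, o (u + (p:ℤ)) = o u)
    {s₀ : ℤ} (hturn : o s₀ ≠ o (s₀ + 1)) {d : ℤ}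
    (hd : (p:ℤ) ∣ d - 1 ∨ (p:ℤ) ∣ d + 1) (hinv : ∀ y, o (y + d) = o y) : False := by
  apply hturn
  rcases hd with hdd | hdd
  · have h1 : o ((s₀ + 1 - d) + d) = o (s₀ + 1 - d) := hinv _
    rw [show s₀ + 1 - d + d = s₀ + 1 by ring] at h1
    rw [h1]
    apply per_dvd hper
    have : s₀ - (s₀ + 1 - d) = d - 1 := by ring
    rw [this]; exact hdd
  · have h1 : o ((s₀ - d) + d) = o (s₀ - d) := hinv _
    rw [show s₀ - d + d = s₀ by ring] at h1
    rw [h1]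
    have h2 : o (s₀ - d) = o (s₀ + 1) := by
      apply per_dvd hper
      have : s₀ - d - (s₀ + 1) = -(d+1) := by ring
      rw [this]
      exact dvd_neg.mpr hdd
    exact h2

def IsCross (p : ℕ) (z : ℤ) : Prop := (∃ μ : ℕ × ℕ, z = xC p μ) ∨ (∃ ν : ℕ × ℕ, z = yC p ν)

lemma cross_close {p : ℕ} (hp : 0 < p) {z z' : ℤ} (h1 : IsCross p z) (h2 : IsCross p z')
    (hle : z - z' ≤ 2 * p) (hge : z' - z ≤ 2 * p) : z = z' := by
  have hp1 : (1:ℤ) ≤ p := by exact_mod_cast hp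
  rcases h1 with ⟨μ, hμ⟩ | ⟨ν, hν⟩ <;> rcases h2 with ⟨μ', hμ'⟩ | ⟨ν', hν'⟩
  · subst hμ hμ'
    unfold xC at *
    rcases lt_trichotomy (codeL μ) (codeL μ') with h | h | h
    · exfalso
      have : (codeL μ : ℤ) + 1 ≤ codeL μ' := by exact_mod_cast h
      nlinarith
    · rw [h]
    · exfalso
      have : (codeL μ' : ℤ) + 1 ≤ codeL μ := by exact_mod_cast h
      nlinarith
  · exfalso
    subst hμ hν'
    unfold xC yC at *
    have ha : (0:ℤ) ≤ codeL μ := Int.ofNat_nonneg _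
    have hb : (0:ℤ) ≤ codeL ν' := Int.ofNat_nonneg _
    nlinarith
  · exfalso
    subst hν hμ'
    unfold xC yC at *
    have ha : (0:ℤ) ≤ codeL μ' := Int.ofNat_nonneg _
    have hb : (0:ℤ) ≤ codeL ν := Int.ofNat_nonneg _
    nlinarith
  · subst hν hν'
    unfold yC at *
    rcases lt_trichotomy (codeL ν) (codeL ν') with h | h | h
    · exfalso
      have : (codeL ν : ℤ) + 1 ≤ codeL ν' := by exact_mod_cast h
      nlinarith
    · rw [h]
    · exfalso
      have : (codeL ν' : ℤ) + 1 ≤ codeL ν := by exact_mod_cast h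
      nlinarith

lemma xC_mod (p : ℕ) (μ : ℕ × ℕ) : (p:ℤ) ∣ xC p μ := ⟨6 * codeL μ, by unfold xC; ring⟩

lemma yC_mod (p : ℕ) (ν : ℕ × ℕ) : (p:ℤ) ∣ yC p ν - 1 := ⟨-(6 * (codeL ν + 1)), by unfold yC; ring⟩

/-- The host digraph: lanes glued at crossings. -/
def Host (o : ℤ → Bool) (p : ℕ) : Digraph Wt where
  Adj w w' := ∃ l : ℕ × ℕ, ∃ t : ℤ, IsLane l ∧
    ((w = rep p (l, t) ∧ w' = rep p (l, t+1) ∧ o t = true) ∨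
     (w = rep p (l, t+1) ∧ w' = rep p (l, t) ∧ o t = false))

section Walk

variable {o : ℤ → Bool} {p : ℕ}

lemma copy_step (c : DCopy (doubleRay o) (Host o p)) (u : ℤ) :
    ∃ l : ℕ × ℕ, ∃ s : ℤ, IsLane l ∧
      ((c.toFun u = rep p (l, s) ∧ c.toFun (u+1) = rep p (l, s+1) ∧ o s = o u) ∨
       (c.toFun u = rep p (l, s+1) ∧ c.toFun (u+1) = rep p (l, s) ∧ o s = !(o u))) := by
  cases ho : o u with
  | true =>
    have hadj : (doubleRay o).Adj u (u+1) := Or.inl ⟨rfl, ho⟩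
    obtain ⟨l, t, hl, hcase⟩ := c.adj _ _ hadj
    rcases hcase with ⟨h1, h2, h3⟩ | ⟨h1, h2, h3⟩
    · exact ⟨l, t, hl, Or.inl ⟨h1, h2, by rw [h3]⟩⟩
    · exact ⟨l, t, hl, Or.inr ⟨h1, h2, by rw [h3]; rfl⟩⟩
  | false =>
    have hadj : (doubleRay o).Adj (u+1) u := Or.inr ⟨rfl, ho⟩
    obtain ⟨l, t, hl, hcase⟩ := c.adj _ _ hadj
    rcases hcase with ⟨h1, h2, h3⟩ | ⟨h1, h2, h3⟩
    · exact ⟨l, t, hl, Or.inr ⟨h2, h1, by rw [h3]; rfl⟩⟩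
    · exact ⟨l, t, hl, Or.inl ⟨h2, h1, by rw [h3]⟩⟩


/-- Forward follow: after entering a lane at a crossing coordinate, the walk follows
that lane for at least `p+1` further steps. -/
lemma fwd (hp : 0 < p) (c : DCopy (doubleRay o) (Host o p)) (u₀ : ℤ) (l : ℕ × ℕ) (b ε : ℤ)
    (hε : ε = 1 ∨ ε = -1) (hb : IsCross p b)
    (h0 : c.toFun u₀ = rep p (l, b)) (h1 : c.toFun (u₀ + 1) = rep p (l, b + ε)) :
    ∀ t : ℕ, t ≤ p →
      c.toFun (u₀ + t) = rep p (l, b + ε * t) ∧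
      c.toFun (u₀ + t + 1) = rep p (l, b + ε * (t+1)) := by
  intro t
  induction t with
  | zero => intro _; simpa using ⟨h0, h1⟩
  | succ t ih =>
    intro htp
    have ht : t ≤ p := Nat.le_of_succ_le htp
    have hc1 : ((t+1 : ℕ) : ℤ) = (t:ℤ)+1 := by push_cast; ring
    rw [hc1]
    have htz : (t:ℤ) + 1 ≤ (p:ℤ) := by exact_mod_cast htp
    obtain ⟨iha, ihb⟩ := ih ht
    -- step at u := u₀ + t + 1
    obtain ⟨l', s, hl', hcase⟩ := copy_step c (u₀ + t + 1)
    by_cases hll : l' = l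
    · subst hll
      rcases hcase with ⟨e1, e2, -⟩ | ⟨e1, e2, -⟩
      · -- UP step: f u = rep (l', s), f (u+1) = rep (l', s+1)
        have hs : s = b + ε * (t+1) := by
          apply rep_lane_inj p hp
          rw [← e1, ihb]
        have hnext : c.toFun (u₀ + t + 1 + 1) = rep p (l', b + ε * (t+1) + 1) := by
          rw [e2, hs]
        -- if ε = -1 this contradicts injectivity
        rcases hε with hε1 | hε1
        · subst hε1
          constructor
          · rw [show (u₀ + ((t:ℤ)+1)) = u₀ + t + 1 by ring, ihb]
          · rw [show (u₀ + ((t:ℤ)+1) + 1) = u₀ + t + 1 + 1 by ring, hnext]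
            congr 1
            ring
        · exfalso
          subst hε1
          have : c.toFun (u₀ + t + 1 + 1) = c.toFun (u₀ + t) := by
            rw [hnext, iha]
            congr 1
            push_cast; ring_nf
          have h2 := c.inj this
          omega
      · -- DOWN step: f u = rep (l', s+1), f (u+1) = rep (l', s)
        have hs : s + 1 = b + ε * (t+1) := by
          apply rep_lane_inj p hp
          rw [← e1, ihb]
        have hs2 : s = b + ε * (t+1) - 1 := by linarith
        have hnext : c.toFun (u₀ + t + 1 + 1) = rep p (l', b + ε * (t+1) - 1) := by
          rw [e2, hs2]
        rcases hε with hε1 | hε1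
        · exfalso
          subst hε1
          have : c.toFun (u₀ + t + 1 + 1) = c.toFun (u₀ + t) := by
            rw [hnext, iha]
            congr 1
            push_cast; ring_nf
          have h2 := c.inj this
          omega
        · subst hε1
          constructor
          · rw [show (u₀ + ((t:ℤ)+1)) = u₀ + t + 1 by ring, ihb]
          · rw [show (u₀ + ((t:ℤ)+1) + 1) = u₀ + t + 1 + 1 by ring, hnext]
            congr 1
            ring
    · -- lane switch within the window: impossible
      exfalso
      have hcrossb : IsCross p (b + ε * (t+1)) := by
        have hex : ∃ x, rep p (l', x) = rep p (l, b + ε * (t+1)) := by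
          rcases hcase with ⟨e1, -, -⟩ | ⟨e1, -, -⟩
          · exact ⟨s, by rw [← e1, ihb]⟩
          · exact ⟨s+1, by rw [← e1, ihb]⟩
        obtain ⟨x, he⟩ := hex
        rcases rep_cross p hp he hll with ⟨-, -, hy⟩ | ⟨-, hy, -⟩
        · exact Or.inl ⟨_, hy⟩
        · exact Or.inr ⟨_, hy⟩
      have hpz : (0:ℤ) < p := by exact_mod_cast hp
      have heq := cross_close hp hb hcrossb (by
        rcases hε with h | h <;> subst h <;> nlinarith) (by
        rcases hε with h | h <;> subst h <;> nlinarith)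
      rcases hε with h | h <;> subst h <;> omega

lemma lane_match (hp : 0 < p) (c : DCopy (doubleRay o) (Host o p)) {l l' : ℕ × ℕ}
    {x y s : ℤ} {u : ℤ}
    (hfu : c.toFun u = rep p (l, x)) (hfu1 : c.toFun (u+1) = rep p (l, y))
    (hdist1 : x - y ≤ 2*p) (hdist2 : y - x ≤ 2*p)
    (hcase : (c.toFun u = rep p (l', s) ∧ c.toFun (u+1) = rep p (l', s+1) ∧ o s = o u) ∨
       (c.toFun u = rep p (l', s+1) ∧ c.toFun (u+1) = rep p (l', s) ∧ o s = !(o u)))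
    (hne : l' ≠ l) : False := by
  have hx : IsCross p x := by
    have hex : ∃ z, rep p (l', z) = rep p (l, x) := by
      rcases hcase with ⟨e1, -, -⟩ | ⟨e1, -, -⟩
      · exact ⟨s, by rw [← e1, hfu]⟩
      · exact ⟨s+1, by rw [← e1, hfu]⟩
    obtain ⟨z, he⟩ := hex
    rcases rep_cross p hp he hne with ⟨-, -, hy⟩ | ⟨-, hy, -⟩
    · exact Or.inl ⟨_, hy⟩
    · exact Or.inr ⟨_, hy⟩
  have hxc : IsCross p x ∧ IsCross p y := by
    constructor
    · exact hx
    · have hex : ∃ z, rep p (l', z) = rep p (l, y) := by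
        rcases hcase with ⟨-, e2, -⟩ | ⟨-, e2, -⟩
        · exact ⟨s+1, by rw [← e2, hfu1]⟩
        · exact ⟨s, by rw [← e2, hfu1]⟩
      obtain ⟨z, he⟩ := hex
      rcases rep_cross p hp he hne with ⟨-, -, hy⟩ | ⟨-, hy, -⟩
      · exact Or.inl ⟨_, hy⟩
      · exact Or.inr ⟨_, hy⟩
  -- also x is cross on lane l' side: get both coords cross and close
  have hyc : IsCross p y := hxc.2
  -- now x and y are two cross coordinates at distance ≥ 1 apart... need x ≠ y
  have hxy : x ≠ y := by
    intro hcontr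
    rw [hcontr] at hfu
    have := c.inj (hfu.trans hfu1.symm)
    omega
  exact hxy (cross_close hp hx hyc hdist1 hdist2)

lemma fwd_eq (hp : 0 < p) (c : DCopy (doubleRay o) (Host o p)) (u₀ : ℤ) (l : ℕ × ℕ) (b ε : ℤ)
    (hε : ε = 1 ∨ ε = -1) (hb : IsCross p b)
    (h0 : c.toFun u₀ = rep p (l, b)) (h1 : c.toFun (u₀ + 1) = rep p (l, b + ε)) :
    ∀ t : ℤ, 0 ≤ t → t < p →
      (ε = 1 → o (b + t) = o (u₀ + t)) ∧ (ε = -1 → o (b - 1 - t) = !(o (u₀ + t))) := by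
  intro t ht0 htp
  set n := t.toNat with hn
  have hnt : (n : ℤ) = t := Int.toNat_of_nonneg ht0
  have hnp : n + 1 ≤ p := by omega
  obtain ⟨ft, ft1⟩ := fwd hp c u₀ l b ε hε hb h0 h1 n (by omega)
  rw [hnt] at ft ft1
  -- step at u₀ + t
  obtain ⟨l', s, hl', hcase⟩ := copy_step c (u₀ + t)
  have hpz : (0:ℤ) < p := by exact_mod_cast hp
  have hll : l' = l := by
    by_contra hne
    apply lane_match hp c (x := b + ε*t) (y := b + ε*(t+1)) (u := u₀ + t)
      ft ft1 ?_ ?_ hcase hne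
    · rcases hε with h | h <;> subst h <;> nlinarith
    · rcases hε with h | h <;> subst h <;> nlinarith
  subst hll
  rcases hcase with ⟨e1, e2, e3⟩ | ⟨e1, e2, e3⟩
  · -- UP
    have hs : s = b + ε * t := rep_lane_inj p hp (by rw [← e1, ft])
    have hs1 : s + 1 = b + ε * (t+1) := rep_lane_inj p hp (by rw [← e2, ft1])
    have hε1 : ε = 1 := by
      rcases hε with h | h
      · exact h
      · exfalso; subst h; omega
    subst hε1
    constructor
    · intro _
      rw [show b + t = s by omega] at *
      exact e3
    · intro hcon; exact absurd hcon (by norm_num)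
  · -- DOWN
    have hs : s + 1 = b + ε * t := rep_lane_inj p hp (by rw [← e1, ft])
    have hs1 : s = b + ε * (t+1) := rep_lane_inj p hp (by rw [← e2, ft1])
    have hε1 : ε = -1 := by
      rcases hε with h | h
      · exfalso; subst h; omega
      · exact h
    subst hε1
    constructor
    · intro hcon; exact absurd hcon (by norm_num)
    · intro _
      rw [show b - 1 - t = s by omega] at *
      exact e3


lemma bwd (hp : 0 < p) (c : DCopy (doubleRay o) (Host o p)) (u₀ : ℤ) (l : ℕ × ℕ) (a ε : ℤ)
    (hε : ε = 1 ∨ ε = -1) (ha : IsCross p a)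
    (h0 : c.toFun u₀ = rep p (l, a)) (h1 : c.toFun (u₀ - 1) = rep p (l, a - ε)) :
    ∀ t : ℕ, t ≤ p →
      c.toFun (u₀ - t) = rep p (l, a - ε * t) ∧
      c.toFun (u₀ - t - 1) = rep p (l, a - ε * (t+1)) := by
  intro t
  induction t with
  | zero => intro _; simpa using ⟨h0, h1⟩
  | succ t ih =>
    intro htp
    have ht : t ≤ p := Nat.le_of_succ_le htp
    have hc1 : ((t+1 : ℕ) : ℤ) = (t:ℤ)+1 := by push_cast; ring
    rw [hc1]
    have htz : (t:ℤ) + 1 ≤ (p:ℤ) := by exact_mod_cast htp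
    have hpz : (0:ℤ) < p := by exact_mod_cast hp
    obtain ⟨iha, ihb⟩ := ih ht
    -- step at w := u₀ - t - 2, with f (w+1) = f (u₀ - t - 1) known
    obtain ⟨l', s, hl', hcase⟩ := copy_step c (u₀ - t - 2)
    have hw1 : u₀ - t - 2 + 1 = u₀ - t - 1 := by ring
    rw [hw1] at hcase
    by_cases hll : l' = l
    · subst hll
      rcases hcase with ⟨e1, e2, -⟩ | ⟨e1, e2, -⟩
      · -- UP step: f w = rep (l', s), f (w+1) = rep (l', s+1)
        have hs : s + 1 = a - ε * (t+1) := by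
          apply rep_lane_inj p hp
          rw [← e2, ihb]
        have hs2 : s = a - ε * (t+1) - 1 := by linarith
        have hprev : c.toFun (u₀ - t - 2) = rep p (l', a - ε * (t+1) - 1) := by
          rw [e1, hs2]
        rcases hε with hε1 | hε1
        · subst hε1
          constructor
          · rw [show (u₀ - ((t:ℤ)+1)) = u₀ - t - 1 by ring, ihb]
          · rw [show (u₀ - ((t:ℤ)+1) - 1) = u₀ - t - 2 by ring, hprev]
            congr 1
            ring
        · exfalso
          subst hε1
          have hcontr : c.toFun (u₀ - t - 2) = c.toFun (u₀ - t) := by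
            rw [hprev, iha]
            congr 1
            ring
          have h2 := c.inj hcontr
          omega
      · -- DOWN step: f w = rep (l', s+1), f (w+1) = rep (l', s)
        have hs : s = a - ε * (t+1) := by
          apply rep_lane_inj p hp
          rw [← e2, ihb]
        have hprev : c.toFun (u₀ - t - 2) = rep p (l', a - ε * (t+1) + 1) := by
          rw [e1, hs]
        rcases hε with hε1 | hε1
        · exfalso
          subst hε1
          have hcontr : c.toFun (u₀ - t - 2) = c.toFun (u₀ - t) := by
            rw [hprev, iha]
            congr 1
            ring
          have h2 := c.inj hcontr
          omega
        · subst hε1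
          constructor
          · rw [show (u₀ - ((t:ℤ)+1)) = u₀ - t - 1 by ring, ihb]
          · rw [show (u₀ - ((t:ℤ)+1) - 1) = u₀ - t - 2 by ring, hprev]
            congr 1
            ring
    · -- lane switch within the window: impossible
      exfalso
      have hcrossb : IsCross p (a - ε * (t+1)) := by
        have hex : ∃ x, rep p (l', x) = rep p (l, a - ε * (t+1)) := by
          rcases hcase with ⟨-, e2, -⟩ | ⟨-, e2, -⟩
          · exact ⟨s+1, by rw [← e2, ihb]⟩
          · exact ⟨s, by rw [← e2, ihb]⟩
        obtain ⟨x, he⟩ := hex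
        rcases rep_cross p hp he hll with ⟨-, -, hy⟩ | ⟨-, hy, -⟩
        · exact Or.inl ⟨_, hy⟩
        · exact Or.inr ⟨_, hy⟩
      have heq := cross_close hp ha hcrossb (by
        rcases hε with h | h <;> subst h <;> nlinarith) (by
        rcases hε with h | h <;> subst h <;> nlinarith)
      rcases hε with h | h <;> subst h <;> omega

lemma bwd_eq (hp : 0 < p) (c : DCopy (doubleRay o) (Host o p)) (u₀ : ℤ) (l : ℕ × ℕ) (a ε : ℤ)
    (hε : ε = 1 ∨ ε = -1) (ha : IsCross p a)
    (h0 : c.toFun u₀ = rep p (l, a)) (h1 : c.toFun (u₀ - 1) = rep p (l, a - ε)) :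
    ∀ t : ℤ, 0 ≤ t → t < p →
      (ε = 1 → o (a - 1 - t) = o (u₀ - 1 - t)) ∧
      (ε = -1 → o (a + t) = !(o (u₀ - 1 - t))) := by
  intro t ht0 htp
  set n := t.toNat with hn
  have hnt : (n : ℤ) = t := Int.toNat_of_nonneg ht0
  have hnp : n + 1 ≤ p := by omega
  have hbt := bwd hp c u₀ l a ε hε ha h0 h1 n (by omega)
  have hbt1 := bwd hp c u₀ l a ε hε ha h0 h1 (n+1) hnp
  have ft1 : c.toFun (u₀ - t) = rep p (l, a - ε * t) := by
    rw [← hnt]; exact hbt.1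
  have ft : c.toFun (u₀ - t - 1) = rep p (l, a - ε * (t+1)) := by
    rw [← hnt]; exact hbt.2
  -- step at u := u₀ - 1 - t
  obtain ⟨l', s, hl', hcase⟩ := copy_step c (u₀ - 1 - t)
  have hw1 : u₀ - 1 - t + 1 = u₀ - t := by ring
  have hw0 : u₀ - 1 - t = u₀ - t - 1 := by ring
  have hpz : (0:ℤ) < p := by exact_mod_cast hp
  have ftA : c.toFun (u₀ - 1 - t) = rep p (l, a - ε * (t+1)) := by rw [hw0]; exact ft
  have ftB : c.toFun (u₀ - 1 - t + 1) = rep p (l, a - ε * t) := by rw [hw1]; exact ft1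
  have hll : l' = l := by
    by_contra hne
    apply lane_match hp c ftA ftB ?_ ?_ hcase hne
    · rcases hε with h | h <;> subst h <;> nlinarith
    · rcases hε with h | h <;> subst h <;> nlinarith
  subst hll
  rcases hcase with ⟨e1, e2, e3⟩ | ⟨e1, e2, e3⟩
  · -- UP
    have hs : s = a - ε * (t+1) := rep_lane_inj p hp (by rw [← e1, ftA])
    have hs1 : s + 1 = a - ε * t := rep_lane_inj p hp (by rw [← e2, ftB])
    have hε1 : ε = 1 := by
      rcases hε with h | h
      · exact h
      · exfalso; subst h; omega
    subst hε1
    refine ⟨fun _ => ?_, fun hcon => absurd hcon (by norm_num)⟩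
    rw [show a - 1 - t = s by omega]
    exact e3
  · -- DOWN
    have hs : s + 1 = a - ε * (t+1) := rep_lane_inj p hp (by rw [← e1, ftA])
    have hs1 : s = a - ε * t := rep_lane_inj p hp (by rw [← e2, ftB])
    have hε1 : ε = -1 := by
      rcases hε with h | h
      · exfalso; subst h; omega
      · exact h
    subst hε1
    refine ⟨fun hcon => absurd hcon (by norm_num), fun _ => ?_⟩
    rw [show a + t = s by omega]
    exact e3


lemma no_switch (hp : 0 < p) (hper : ∀ u : ℤ, o (u + (p:ℤ)) = o u)
    {s₀ : ℤ} (hturn : o s₀ ≠ o (s₀ + 1))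
    (c : DCopy (doubleRay o) (Host o p)) (u : ℤ)
    (l1 l2 : ℕ × ℕ) (s1 s2 : ℤ)
    (hcase1 : (c.toFun u = rep p (l1, s1) ∧ c.toFun (u+1) = rep p (l1, s1+1) ∧ o s1 = o u) ∨
       (c.toFun u = rep p (l1, s1+1) ∧ c.toFun (u+1) = rep p (l1, s1) ∧ o s1 = !(o u)))
    (hcase2 : (c.toFun (u+1) = rep p (l2, s2) ∧ c.toFun (u+1+1) = rep p (l2, s2+1) ∧ o s2 = o (u+1)) ∨
       (c.toFun (u+1) = rep p (l2, s2+1) ∧ c.toFun (u+1+1) = rep p (l2, s2) ∧ o s2 = !(o (u+1)))) :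
    l1 = l2 := by
  by_contra hne
  have hpz : (0:ℤ) < p := by exact_mod_cast hp
  -- extract arrival data on lane l1
  obtain ⟨a₁, εin, hεin, hA0, hA1⟩ :
      ∃ a₁ εin : ℤ, (εin = 1 ∨ εin = -1) ∧ c.toFun (u+1) = rep p (l1, a₁) ∧
        c.toFun (u+1-1) = rep p (l1, a₁ - εin) := by
    rcases hcase1 with ⟨e1, e2, -⟩ | ⟨e1, e2, -⟩
    · exact ⟨s1 + 1, 1, Or.inl rfl, e2, by rw [show u+1-1 = u by ring, show s1+1-1 = s1 by ring]; exact e1⟩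
    · exact ⟨s1, -1, Or.inr rfl, e2, by rw [show u+1-1 = u by ring, show s1 - (-1) = s1+1 by ring]; exact e1⟩
  -- extract departure data on lane l2
  obtain ⟨b₁, εout, hεout, hB0, hB1⟩ :
      ∃ b₁ εout : ℤ, (εout = 1 ∨ εout = -1) ∧ c.toFun (u+1) = rep p (l2, b₁) ∧
        c.toFun (u+1+1) = rep p (l2, b₁ + εout) := by
    rcases hcase2 with ⟨e1, e2, -⟩ | ⟨e1, e2, -⟩
    · exact ⟨s2, 1, Or.inl rfl, e1, e2⟩
    · exact ⟨s2 + 1, -1, Or.inr rfl, e1, by rw [show s2+1+-1 = s2 by ring]; exact e2⟩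
  -- crossing structure
  have hrc := rep_cross p hp (hA0.symm.trans hB0) hne
  have hmods : ((p:ℤ) ∣ a₁ - 1 ∧ (p:ℤ) ∣ b₁) ∨ ((p:ℤ) ∣ a₁ ∧ (p:ℤ) ∣ b₁ - 1) := by
    rcases hrc with ⟨-, hx, hy⟩ | ⟨-, hy, hx⟩
    · exact Or.inl ⟨by rw [hx]; exact yC_mod p l2, by rw [hy]; exact xC_mod p l1⟩
    · exact Or.inr ⟨by rw [hx]; exact xC_mod p l2, by rw [hy]; exact yC_mod p l1⟩
  have hcra : IsCross p a₁ := by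
    rcases hrc with ⟨-, hx, -⟩ | ⟨-, -, hx⟩
    · exact Or.inr ⟨_, hx⟩
    · exact Or.inl ⟨_, hx⟩
  have hcrb : IsCross p b₁ := by
    rcases hrc with ⟨-, -, hy⟩ | ⟨-, hy, -⟩
    · exact Or.inl ⟨_, hy⟩
    · exact Or.inr ⟨_, hy⟩
  -- the two equation families
  have Ein := bwd_eq hp c (u+1) l1 a₁ εin hεin hcra hA0 hA1
  have Eout := fwd_eq hp c (u+1) l2 b₁ εout hεout hcrb hB0 hB1
  set m := u + 1 with hm
  -- dispatch the four combos
  rcases hεin with hι | hι <;> subst hι <;> rcases hεout with hω | hω <;> subst hω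
  · -- (+,+)
    have ein : ∀ t : ℤ, 0 ≤ t → t < p → o (a₁ - 1 - t) = o (m - 1 - t) := by
      intro t h1 h2; exact (Ein t h1 h2).1 rfl
    have ext1 : ∀ z : ℤ, o (a₁ - 1 - z) = o (m - 1 - z) := by
      apply agree_ext hp _ _ ?_ ?_ 0 (by intro t h1 h2; simpa using ein t h1 h2)
      · intro z; apply per_dvd hper; exact ⟨-1, by ring⟩
      · intro z; apply per_dvd hper; exact ⟨-1, by ring⟩
    have hEq1 : ∀ z : ℤ, o (m + z) = o (a₁ + z) := by
      intro z
      have := ext1 (-1 - z)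
      rw [show a₁ - 1 - (-1 - z) = a₁ + z by ring, show m - 1 - (-1 - z) = m + z by ring] at this
      exact this.symm
    have eout : ∀ t : ℤ, 0 ≤ t → t < p → o (b₁ + t) = o (a₁ + t) := by
      intro t h1 h2
      have := (Eout t h1 h2).1 rfl
      rw [this, hEq1]
    have ext2 : ∀ z : ℤ, o (b₁ + z) = o (a₁ + z) := by
      apply agree_ext hp _ _ ?_ ?_ 0 (by intro t h1 h2; simpa using eout t h1 h2)
      · intro z; apply per_dvd hper; exact ⟨1, by ring⟩
      · intro z; apply per_dvd hper; exact ⟨1, by ring⟩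
    have hinv : ∀ y : ℤ, o (y + (a₁ - b₁)) = o y := by
      intro y
      have := ext2 (y - b₁)
      rw [show b₁ + (y - b₁) = y by ring, show a₁ + (y - b₁) = y + (a₁ - b₁) by ring] at this
      exact this.symm
    exact shift_inv_contra hper hturn (by
      rcases hmods with ⟨h1, h2⟩ | ⟨h1, h2⟩
      · obtain ⟨x, hx⟩ := h1; obtain ⟨y, hy⟩ := h2
        exact Or.inl ⟨x - y, by rw [mul_sub]; omega⟩
      · obtain ⟨x, hx⟩ := h1; obtain ⟨y, hy⟩ := h2
        exact Or.inr ⟨x - y, by rw [mul_sub]; omega⟩) hinv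
  · -- (+,-)
    have ein : ∀ t : ℤ, 0 ≤ t → t < p → o (a₁ - 1 - t) = o (m - 1 - t) := by
      intro t h1 h2; exact (Ein t h1 h2).1 rfl
    have ext1 : ∀ z : ℤ, o (a₁ - 1 - z) = o (m - 1 - z) := by
      apply agree_ext hp _ _ ?_ ?_ 0 (by intro t h1 h2; simpa using ein t h1 h2)
      · intro z; apply per_dvd hper; exact ⟨-1, by ring⟩
      · intro z; apply per_dvd hper; exact ⟨-1, by ring⟩
    have hEq1 : ∀ z : ℤ, o (m + z) = o (a₁ + z) := by
      intro z
      have := ext1 (-1 - z)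
      rw [show a₁ - 1 - (-1 - z) = a₁ + z by ring, show m - 1 - (-1 - z) = m + z by ring] at this
      exact this.symm
    obtain ⟨t₀, ht0, ht1, hdvd⟩ :
        ∃ t₀ : ℤ, 0 ≤ t₀ ∧ t₀ < p ∧ (p:ℤ) ∣ (b₁ - 1 - t₀) - (a₁ + t₀) := by
      rcases hmods with ⟨h1, h2⟩ | ⟨h1, h2⟩
      · exact ⟨(p:ℤ) - 1, by omega, by omega, by
          obtain ⟨x, hx⟩ := h1; obtain ⟨y, hy⟩ := h2
          exact ⟨y - x - 2, by linarith [hx, hy]⟩⟩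
      · exact ⟨0, le_refl 0, hpz, by
          obtain ⟨x, hx⟩ := h1; obtain ⟨y, hy⟩ := h2
          exact ⟨y - x, by linarith [hx, hy]⟩⟩
    have heq := (Eout t₀ ht0 ht1).2 rfl
    rw [hEq1 t₀] at heq
    have hsame : o (b₁ - 1 - t₀) = o (a₁ + t₀) := per_dvd hper hdvd
    rw [hsame] at heq
    simp at heq
  · -- (-,+)
    have ein : ∀ t : ℤ, 0 ≤ t → t < p → o (a₁ + t) = !(o (m - 1 - t)) := by
      intro t h1 h2; exact (Ein t h1 h2).2 rfl
    have ext1 : ∀ z : ℤ, o (a₁ + z) = !(o (m - 1 - z)) := by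
      apply agree_ext hp _ _ ?_ ?_ 0 (by intro t h1 h2; simpa using ein t h1 h2)
      · intro z; apply per_dvd hper; exact ⟨1, by ring⟩
      · intro z
        apply congrArg Bool.not
        apply per_dvd hper; exact ⟨-1, by ring⟩
    have hEq2 : ∀ z : ℤ, o (m + z) = !(o (a₁ - 1 - z)) := by
      intro z
      have := ext1 (-1 - z)
      rw [show a₁ + (-1 - z) = a₁ - 1 - z by ring, show m - 1 - (-1 - z) = m + z by ring] at this
      cases h1 : o (a₁ - 1 - z) <;> cases h2 : o (m + z) <;> rw [h1, h2] at this <;> simp_all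
    obtain ⟨t₀, ht0, ht1, hdvd⟩ :
        ∃ t₀ : ℤ, 0 ≤ t₀ ∧ t₀ < p ∧ (p:ℤ) ∣ (b₁ + t₀) - (a₁ - 1 - t₀) := by
      rcases hmods with ⟨h1, h2⟩ | ⟨h1, h2⟩
      · exact ⟨0, le_refl 0, hpz, by
          obtain ⟨x, hx⟩ := h1; obtain ⟨y, hy⟩ := h2
          exact ⟨y - x, by linarith [hx, hy]⟩⟩
      · exact ⟨(p:ℤ) - 1, by omega, by omega, by
          obtain ⟨x, hx⟩ := h1; obtain ⟨y, hy⟩ := h2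
          exact ⟨y - x + 2, by linarith [hx, hy]⟩⟩
    have heq := (Eout t₀ ht0 ht1).1 rfl
    rw [hEq2 t₀] at heq
    have hsame : o (b₁ + t₀) = o (a₁ - 1 - t₀) := per_dvd hper hdvd
    rw [hsame] at heq
    simp at heq
  · -- (-,-)
    have ein : ∀ t : ℤ, 0 ≤ t → t < p → o (a₁ + t) = !(o (m - 1 - t)) := by
      intro t h1 h2; exact (Ein t h1 h2).2 rfl
    have ext1 : ∀ z : ℤ, o (a₁ + z) = !(o (m - 1 - z)) := by
      apply agree_ext hp _ _ ?_ ?_ 0 (by intro t h1 h2; simpa using ein t h1 h2)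
      · intro z; apply per_dvd hper; exact ⟨1, by ring⟩
      · intro z
        apply congrArg Bool.not
        apply per_dvd hper; exact ⟨-1, by ring⟩
    have hEq2 : ∀ z : ℤ, o (m + z) = !(o (a₁ - 1 - z)) := by
      intro z
      have := ext1 (-1 - z)
      rw [show a₁ + (-1 - z) = a₁ - 1 - z by ring, show m - 1 - (-1 - z) = m + z by ring] at this
      cases h1 : o (a₁ - 1 - z) <;> cases h2 : o (m + z) <;> rw [h1, h2] at this <;> simp_all
    have eout : ∀ t : ℤ, 0 ≤ t → t < p → o (b₁ - 1 - t) = o (a₁ - 1 - t) := by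
      intro t h1 h2
      have := (Eout t h1 h2).2 rfl
      rw [this, hEq2]
      cases o (a₁ - 1 - t) <;> simp
    have ext2 : ∀ z : ℤ, o (b₁ - 1 - z) = o (a₁ - 1 - z) := by
      apply agree_ext hp _ _ ?_ ?_ 0 (by intro t h1 h2; simpa using eout t h1 h2)
      · intro z; apply per_dvd hper; exact ⟨-1, by ring⟩
      · intro z; apply per_dvd hper; exact ⟨-1, by ring⟩
    have hinv : ∀ y : ℤ, o (y + (b₁ - a₁)) = o y := by
      intro y
      have := ext2 (a₁ - 1 - y)
      rw [show b₁ - 1 - (a₁ - 1 - y) = y + (b₁ - a₁) by ring,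
          show a₁ - 1 - (a₁ - 1 - y) = y by ring] at this
      exact this
    exact shift_inv_contra hper hturn (by
      rcases hmods with ⟨h1, h2⟩ | ⟨h1, h2⟩
      · obtain ⟨x, hx⟩ := h1; obtain ⟨y, hy⟩ := h2
        exact Or.inr ⟨y - x, by rw [mul_sub]; omega⟩
      · obtain ⟨x, hx⟩ := h1; obtain ⟨y, hy⟩ := h2
        exact Or.inl ⟨y - x, by rw [mul_sub]; omega⟩) hinv


theorem classify (hp : 0 < p) (hper : ∀ u : ℤ, o (u + (p:ℤ)) = o u)
    {s₀ : ℤ} (hturn : o s₀ ≠ o (s₀ + 1))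
    (c : DCopy (doubleRay o) (Host o p)) :
    ∃ l : ℕ × ℕ, IsLane l ∧ ∀ z : ℤ, ∃ u : ℤ, c.toFun u = rep p (l, z) := by
  choose L S hLane hcase using copy_step c
  have hconst : ∀ u : ℤ, L u = L (u+1) := fun u =>
    no_switch hp hper hturn c u (L u) (L (u+1)) (S u) (S (u+1)) (hcase u) (hcase (u+1))
  have hL : ∀ u : ℤ, L u = L 0 := by
    intro u
    induction u using Int.induction_on with
    | zero => rfl
    | succ i ih => rw [← hconst i]; exact ih
    | pred i ih =>
      have h2 := hconst (-(i:ℤ) - 1)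
      rw [show -(i:ℤ) - 1 + 1 = -(i:ℤ) by ring] at h2
      rw [h2]; exact ih
  set l := L 0 with hl
  have hstep2 : ∀ u : ℤ, ∃ x d : ℤ, (d = 1 ∨ d = -1) ∧
      c.toFun u = rep p (l, x) ∧ c.toFun (u+1) = rep p (l, x + d) := by
    intro u
    have hLu : L u = l := hL u
    rcases hcase u with ⟨e1, e2, -⟩ | ⟨e1, e2, -⟩
    · rw [hLu] at e1 e2
      exact ⟨S u, 1, Or.inl rfl, e1, e2⟩
    · rw [hLu] at e1 e2
      exact ⟨S u + 1, -1, Or.inr rfl, e1, by rw [show S u + 1 + -1 = S u by ring]; exact e2⟩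
  choose X D hD hX hX1 using hstep2
  have hXc : ∀ u : ℤ, X (u+1) = X u + D u := by
    intro u
    apply rep_lane_inj p hp
    rw [← hX (u+1), hX1 u]
  have hDc : ∀ u : ℤ, D (u+1) = D u := by
    intro u
    rcases hD u with h1 | h1 <;> rcases hD (u+1) with h2 | h2 <;> rw [h1, h2]
    · exfalso
      have hXX : X (u+1+1) = X u := by
        rw [hXc (u+1), hXc u, h1, h2]; ring
      have : c.toFun (u+1+1) = c.toFun u := by rw [hX (u+1+1), hX u, hXX]
      have := c.inj this
      omega
    · exfalso
      have hXX : X (u+1+1) = X u := by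
        rw [hXc (u+1), hXc u, h1, h2]; ring
      have : c.toFun (u+1+1) = c.toFun u := by rw [hX (u+1+1), hX u, hXX]
      have := c.inj this
      omega
  have hDconst : ∀ u : ℤ, D u = D 0 := by
    intro u
    induction u using Int.induction_on with
    | zero => rfl
    | succ i ih => rw [hDc i]; exact ih
    | pred i ih =>
      have h2 := hDc (-(i:ℤ) - 1)
      rw [show -(i:ℤ) - 1 + 1 = -(i:ℤ) by ring] at h2
      rw [← h2]; exact ih
  have hXlin : ∀ u : ℤ, X u = X 0 + D 0 * u := by
    intro u
    induction u using Int.induction_on with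
    | zero => ring
    | succ i ih => rw [hXc i, ih, hDconst i]; ring
    | pred i ih =>
      have h2 := hXc (-(i:ℤ) - 1)
      rw [show -(i:ℤ) - 1 + 1 = -(i:ℤ) by ring] at h2
      rw [ih, hDconst (-(i:ℤ)-1)] at h2
      have : X (-(i:ℤ) - 1) = X 0 + D 0 * (-(i:ℤ)) - D 0 := by omega
      rw [this]; ring
  refine ⟨l, by rw [hl]; exact hLane 0, ?_⟩
  intro z
  refine ⟨D 0 * (z - X 0), ?_⟩
  rw [hX (D 0 * (z - X 0)), hXlin]
  congr 1
  have hsq : D 0 * D 0 = 1 := by rcases hD 0 with h | h <;> rw [h] <;> ring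
  have : X 0 + D 0 * (D 0 * (z - X 0)) = X 0 + (D 0 * D 0) * (z - X 0) := by ring
  rw [this, hsq]
  ring


noncomputable def laneCopy (o : ℤ → Bool) (p : ℕ) (hp : 0 < p) (l : ℕ × ℕ) (hl : IsLane l) :
    DCopy (doubleRay o) (Host o p) where
  toFun u := rep p (l, u)
  inj := fun a b h => rep_lane_inj p hp h
  adj := by
    intro u v hadj
    rcases hadj with ⟨h1, h2⟩ | ⟨h1, h2⟩
    · subst h1
      exact ⟨l, u, hl, Or.inl ⟨rfl, rfl, h2⟩⟩
    · subst h1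
      exact ⟨l, v, hl, Or.inr ⟨rfl, rfl, h2⟩⟩

/-- two lanes in the same group never share a vertex -/
lemma same_group_disjoint (hp : 0 < p) {k i j : ℕ} (hij : i ≠ j) (u v : ℤ) :
    rep p ((k, i), u) ≠ rep p ((k, j), v) := by
  intro h
  have hne : ((k,i) : ℕ × ℕ) ≠ (k,j) := by
    intro hc
    exact hij (by injection hc with h1 h2)
  rcases rep_cross p hp h hne with ⟨hcr, -, -⟩ | ⟨hcr, -, -⟩
  · exact absurd hcr.2.2 (by norm_num)
  · exact absurd hcr.2.2 (by norm_num)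

lemma host_many (hp : 0 < p) : ManyDisjointCopies (doubleRay o) (Host o p) := by
  intro k
  refine ⟨fun i => laneCopy o p hp (k, i.val) i.isLt, ?_⟩
  intro i j hij u v
  have : i.val ≠ j.val := fun hc => hij (Fin.ext hc)
  exact same_group_disjoint hp this u v

lemma host_not_inf (hp : 0 < p) (hper : ∀ u : ℤ, o (u + (p:ℤ)) = o u)
    {s₀ : ℤ} (hturn : o s₀ ≠ o (s₀ + 1)) :
    ¬ InfDisjointCopies (doubleRay o) (Host o p) := by
  rintro ⟨g, hdisj⟩
  choose l hLane hsurj using fun i => classify hp hper hturn (g i)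
  -- all lanes lie in the same group
  have hgroup : ∀ i j : ℕ, (l i).1 = (l j).1 := by
    intro i j
    by_contra hne
    rcases Nat.lt_or_ge (l i).1 (l j).1 with hlt | hge
    · -- crossing of (l i) (smaller) and (l j) (larger)
      have hcr : Crossing (l i) (l j) := ⟨hLane i, hLane j, hlt⟩
      obtain ⟨u, hu⟩ := hsurj i (xC p (l j))
      obtain ⟨v, hv⟩ := hsurj j (yC p (l i))
      have hij : i ≠ j := by
        intro hc; rw [hc] at hlt; omega
      apply hdisj i j hij u v
      rw [hu, hv, rep_redirect p hp hcr, rep_xC p hp]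
    · have hlt : (l j).1 < (l i).1 := by omega
      have hcr : Crossing (l j) (l i) := ⟨hLane j, hLane i, hlt⟩
      obtain ⟨u, hu⟩ := hsurj i (yC p (l j))
      obtain ⟨v, hv⟩ := hsurj j (xC p (l i))
      have hij : i ≠ j := by
        intro hc; rw [hc] at hlt; omega
      apply hdisj i j hij u v
      rw [hu, hv, rep_redirect p hp hcr, rep_xC p hp]
  -- all lanes distinct
  have hlanes : ∀ i j : ℕ, i ≠ j → l i ≠ l j := by
    intro i j hij hc
    obtain ⟨u, hu⟩ := hsurj i 0
    obtain ⟨v, hv⟩ := hsurj j 0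
    apply hdisj i j hij u v
    rw [hu, hv, hc]
  -- pigeonhole within group n
  set n := (l 0).1 with hn
  have hFdef : ∀ t : Fin (n+1), (l t.val).2 < n := by
    intro t
    have h1 := hLane t.val
    have h2 := hgroup t.val 0
    unfold IsLane at h1
    omega
  have hinj : Function.Injective (fun t : Fin (n+1) => (⟨(l t.val).2, hFdef t⟩ : Fin n)) := by
    intro a b hab
    simp only [Fin.mk.injEq] at hab
    by_contra hne
    have hne' : a.val ≠ b.val := fun hc => hne (Fin.ext hc)
    apply hlanes a.val b.val hne'
    apply Prod.ext
    · rw [hgroup a.val 0, hgroup b.val 0]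
    · exact hab
  have := Fintype.card_le_of_injective _ hinj
  simp at this

theorem host_counterexample (hp : 0 < p) (hper : ∀ u : ℤ, o (u + (p:ℤ)) = o u)
    {s₀ : ℤ} (hturn : o s₀ ≠ o (s₀ + 1)) :
    ¬ Ubiquitous (doubleRay o) := by
  intro hU
  exact host_not_inf hp hper hturn (hU Wt (Host o p) (host_many hp))


end Walk
end PIT


/-- every periodic oriented double ray with infinitely many turns
is non-ubiquitous. -/
theorem periodic_infinite_turns_not_ubiquitous (o : ℤ → Bool)
    (hinf : {n : ℤ | IsTurn o n}.Infinite)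
    (hp : DRayPeriodic o) :
    ¬ Ubiquitous (doubleRay o) := by
  obtain ⟨p, hp0, hper⟩ := PIT.exists_period o hp
  obtain ⟨n₀, hn₀⟩ := hinf.nonempty
  have hturn : o (n₀ - 1) ≠ o ((n₀ - 1) + 1) := by
    rw [show n₀ - 1 + 1 = n₀ by ring]
    exact hn₀
  exact PIT.host_counterexample hp0 hper hturn
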